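/- Let A ⊆ {±1}^d be a set of points such that every two distinct u,v ∈ A differ in between (1−ε)d/2 and (1+ε)d/2 coordinates, where 0 < ε < 1, and let t satisfy (1+ε)√2 ≤ t ≤ (1−ε)·2 (assuming such t exists, i.e., ε small enough). Then: (a) every t-spanner of A (in the Euclidean metric) must contain all |A|(|A|−1)/2 pairs as edges; (b) adding the origin 0 ∈ ℝ^d, the star centered at 0 with leaves A is a t-spanner of A ∪ {0}. -/

import Mathlib

/-- Total length of a polygonal path (sum of distances between consecutive
vertices). -/
noncomputable def pathWeight {X : Type*} [MetricSpace X] : List X → ℝ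
  | [] => 0
  | [_] => 0
  | a :: b :: rest => dist a b + pathWeight (b :: rest)

lemma pathWeight_cons_cons {X : Type*} [MetricSpace X] (a b : X) (l : List X) :
    pathWeight (a :: b :: l) = dist a b + pathWeight (b :: l) := rfl

lemma dist_le_pathWeight {X : Type*} [MetricSpace X] :
    ∀ (l : List X) (a b : X), (a :: l).getLast? = some b → dist a b ≤ pathWeight (a :: l)
  | [], a, b, h => by
      simp at h; subst h; simp [pathWeight]
  | c :: l', a, b, h => by
      have h' : (c :: l').getLast? = some b := by
        simpa [List.getLast?_cons_cons] using h
      have ih := dist_le_pathWeight l' c b h'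
      rw [pathWeight_cons_cons]
      calc dist a b ≤ dist a c + dist c b := dist_triangle a c b
        _ ≤ dist a c + pathWeight (c :: l') := by linarith

lemma exists_first_step {X : Type*} [MetricSpace X] (R : X → X → Prop) :
    ∀ (p : List X) (u v : X), p.head? = some u → p.getLast? = some v →
      List.Chain' R p → u ≠ v →
      ∃ w, R u w ∧ w ≠ u ∧ dist u w + dist w v ≤ pathWeight p
  | [], u, v, hh, _, _, _ => by simp at hh
  | [a], u, v, hh, hl, _, hne => by
      simp at hh hl; exact absurd (hh.symm.trans hl) hne
  | a :: c :: rest, u, v, hh, hl, hc, hne => by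
      simp at hh; subst hh
      have hl' : (c :: rest).getLast? = some v := by
        simpa [List.getLast?_cons_cons] using hl
      have hRac : R a c := hc.rel_head
      have hc' : List.Chain' R (c :: rest) := hc.tail
      by_cases hca : c = a
      · subst hca
        obtain ⟨w, hRw, hwne, hw⟩ := exists_first_step R (c :: rest) c v rfl hl' hc' hne
        exact ⟨w, hRw, hwne, by rw [pathWeight_cons_cons]; simp; linarith⟩
      · refine ⟨c, hRac, hca, ?_⟩
        rw [pathWeight_cons_cons]
        have := dist_le_pathWeight rest c v hl'
        linarith

open Classical in
lemma dist_pm {dim : ℕ} (u v : EuclideanSpace ℝ (Fin dim))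
    (hu : ∀ k, u k = 1 ∨ u k = -1) (hv : ∀ k, v k = 1 ∨ v k = -1) :
    dist u v = Real.sqrt (4 * (Finset.univ.filter (fun k => u k ≠ v k)).card) := by
  rw [EuclideanSpace.dist_eq]
  congr 1
  have key : ∀ k : Fin dim, dist (u k) (v k) ^ 2 = if u k ≠ v k then 4 else 0 := by
    intro k
    rcases hu k with h1 | h1 <;> rcases hv k with h2 | h2 <;>
      simp [Real.dist_eq, h1, h2] <;> norm_num
  rw [Finset.sum_congr rfl fun k _ => key k, Finset.sum_ite, Finset.sum_const,
    Finset.sum_const]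
  simp [mul_comm]

lemma dist_zero_pm {dim : ℕ} (u : EuclideanSpace ℝ (Fin dim))
    (hu : ∀ k, u k = 1 ∨ u k = -1) :
    dist u (0 : EuclideanSpace ℝ (Fin dim)) = Real.sqrt dim := by
  rw [EuclideanSpace.dist_eq]
  congr 1
  have key : ∀ k : Fin dim, dist (u k) ((0 : EuclideanSpace ℝ (Fin dim)) k) ^ 2 = 1 := by
    intro k
    rcases hu k with h1 | h1 <;> simp [Real.dist_eq, h1]
  rw [Finset.sum_congr rfl fun k _ => key k]
  simp

open Classical in
/-- Let `A ⊆ {±1}^dim` be such that every two distinct points of `A` differ in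
between `(1−ε)dim/2` and `(1+ε)dim/2` coordinates, and let
`(1+ε)√2 ≤ t ≤ (1−ε)·2`. Then (a) every `t`-spanner of `A` (in the Euclidean
metric) contains all pairs of distinct points of `A` as edges, and (b) the star
centered at the origin with leaves `A` is a `t`-spanner of `A ∪ {0}`. -/
theorem hypercube_spanner (dim : ℕ) (ε t : ℝ) (hε0 : 0 < ε) (hε1 : ε < 1)
    (ht1 : (1 + ε) * Real.sqrt 2 ≤ t) (ht2 : t ≤ (1 - ε) * 2)
    (A : Finset (EuclideanSpace ℝ (Fin dim)))
    (hpm : ∀ u ∈ A, ∀ k, u k = 1 ∨ u k = -1)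
    (hdiff : ∀ u ∈ A, ∀ v ∈ A, u ≠ v →
      (1 - ε) * dim / 2 ≤ ((Finset.univ.filter (fun k => u k ≠ v k)).card : ℝ) ∧
      ((Finset.univ.filter (fun k => u k ≠ v k)).card : ℝ) ≤ (1 + ε) * dim / 2) :
    (∀ E : Set (EuclideanSpace ℝ (Fin dim) × EuclideanSpace ℝ (Fin dim)),
      (∀ e ∈ E, e.1 ∈ A ∧ e.2 ∈ A) →
      (∀ u ∈ A, ∀ v ∈ A, ∃ p : List (EuclideanSpace ℝ (Fin dim)),
        p.head? = some u ∧ p.getLast? = some v ∧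
        List.Chain' (fun x y => (x, y) ∈ E ∨ (y, x) ∈ E) p ∧
        pathWeight p ≤ t * dist u v) →
      ∀ u ∈ A, ∀ v ∈ A, u ≠ v → (u, v) ∈ E ∨ (v, u) ∈ E) ∧
    (∀ u ∈ A, ∀ v ∈ A, u ≠ v →
      dist u (0 : EuclideanSpace ℝ (Fin dim)) +
          dist (0 : EuclideanSpace ℝ (Fin dim)) v ≤ t * dist u v) := by
  rcases Nat.eq_zero_or_pos dim with h0 | hpos
  · subst h0
    have triv : ∀ u v : EuclideanSpace ℝ (Fin 0), u = v :=
      fun u v => PiLp.ext fun k => Fin.elim0 k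
    exact ⟨fun E _ _ u _ v _ hne => absurd (triv u v) hne,
      fun u _ v _ hne => absurd (triv u v) hne⟩
  have hD : (1 : ℝ) ≤ (dim : ℝ) := by exact_mod_cast hpos
  set D : ℝ := (dim : ℝ) with hDdef
  have hs2 : (Real.sqrt 2) ^ 2 = 2 := Real.sq_sqrt (by norm_num)
  have hs2one : (1 : ℝ) ≤ Real.sqrt 2 := by
    nlinarith [Real.sqrt_nonneg 2]
  have hε3 : ε ≤ 1 / 3 := by
    have h1 : (1 + ε) * 1 ≤ (1 + ε) * Real.sqrt 2 :=
      mul_le_mul_of_nonneg_left hs2one (by linarith)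
    linarith
  have ht0 : 0 < t := lt_of_lt_of_le (by nlinarith) ht1
  -- distance bounds between distinct points of A
  have hbound : ∀ u ∈ A, ∀ v ∈ A, u ≠ v →
      Real.sqrt (2 * (1 - ε) * D) ≤ dist u v ∧
      dist u v ≤ Real.sqrt (2 * (1 + ε) * D) := by
    intro u hu v hv hne
    have hd := dist_pm u v (hpm u hu) (hpm v hv)
    obtain ⟨hlo, hhi⟩ := hdiff u hu v hv hne
    constructor
    · rw [hd]
      apply Real.sqrt_le_sqrt
      linarith
    · rw [hd]
      apply Real.sqrt_le_sqrt
      linarith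
  have hmpos : 0 < Real.sqrt (2 * (1 - ε) * D) := Real.sqrt_pos.mpr (by nlinarith)
  constructor
  · -- part (a)
    intro E hE hsp u hu v hv hne
    obtain ⟨p, hh, hl, hc, hw⟩ := hsp u hu v hv
    obtain ⟨w, hRw, hwu, hdw⟩ :=
      exists_first_step (fun x y => (x, y) ∈ E ∨ (y, x) ∈ E) p u v hh hl hc hne
    have hwA : w ∈ A := by
      rcases hRw with h | h
      · exact (hE _ h).2
      · exact (hE _ h).1
    by_cases hwv : w = v
    · subst hwv; exact hRw
    · exfalso
      have h1 := (hbound u hu w hwA (fun h => hwu h.symm)).1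
      have h2 := (hbound w hwA v hv hwv).1
      have h3 := (hbound u hu v hv hne).2
      have h4 : t * dist u v ≤ (1 - ε) * 2 * Real.sqrt (2 * (1 + ε) * D) := by
        have := dist_nonneg (x := u) (y := v)
        nlinarith
      have h5 : (1 - ε) * Real.sqrt (2 * (1 + ε) * D) =
          Real.sqrt ((1 - ε) ^ 2 * (2 * (1 + ε) * D)) := by
        rw [Real.sqrt_mul (sq_nonneg _), Real.sqrt_sq (by linarith)]
      have h6 : Real.sqrt ((1 - ε) ^ 2 * (2 * (1 + ε) * D)) <
          Real.sqrt (2 * (1 - ε) * D) := by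
        apply Real.sqrt_lt_sqrt (by positivity)
        nlinarith [mul_pos (mul_pos (mul_pos two_pos (pow_pos hε0 2))
          (by linarith : (0:ℝ) < 1 - ε)) (by linarith : (0:ℝ) < D)]
      linarith
  · -- part (b)
    intro u hu v hv hne
    rw [dist_zero_pm u (hpm u hu), dist_comm, dist_zero_pm v (hpm v hv)]
    have h1 := (hbound u hu v hv hne).1
    have key : 2 * Real.sqrt D ≤ (1 + ε) * Real.sqrt 2 * Real.sqrt (2 * (1 - ε) * D) := by
      have e1 : (1 + ε) * Real.sqrt 2 * Real.sqrt (2 * (1 - ε) * D) =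
          Real.sqrt ((1 + ε) ^ 2 * (2 * (2 * (1 - ε) * D))) := by
        rw [Real.sqrt_mul (sq_nonneg _), Real.sqrt_mul (by norm_num : (0:ℝ) ≤ 2),
          Real.sqrt_sq (by linarith)]
        ring
      have e2 : 2 * Real.sqrt D = Real.sqrt (4 * D) := by
        rw [show (4 : ℝ) * D = 2 ^ 2 * D by ring, Real.sqrt_mul (by norm_num),
          Real.sqrt_sq (by norm_num)]
      rw [e1, e2]
      apply Real.sqrt_le_sqrt
      have hq : (0:ℝ) ≤ 1 - ε - ε ^ 2 := by nlinarith
      nlinarith [mul_nonneg (mul_nonneg (by linarith : (0:ℝ) ≤ 4 * D) hε0.le) hq]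
    have h2 : (1 + ε) * Real.sqrt 2 * Real.sqrt (2 * (1 - ε) * D) ≤
        t * Real.sqrt (2 * (1 - ε) * D) :=
      mul_le_mul_of_nonneg_right ht1 (le_of_lt hmpos)
    have h3 : t * Real.sqrt (2 * (1 - ε) * D) ≤ t * dist u v :=
      mul_le_mul_of_nonneg_left h1 (le_of_lt ht0)
    linarith
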